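/- Let $S, T \in \mathbb{M}_n^+$, let $p \ge 1$, and let $\|\cdot\|$ be any symmetric norm on $\mathbb{M}_n$. Then $\left\| \left( \frac{S+T}{2} \right)^p \right\| \le \frac{\|S^p\| + \|T^p\|}{2}$, where powers of positive semi-definite matrices are taken by functional calculus. -/

import Mathlib

open Matrix
open scoped ComplexOrder

/-- The absolute value `|Z| = (Zᴴ Z)^(1/2)` of a square complex matrix. -/
noncomputable def matAbs {m : Type*} [Fintype m] [DecidableEq m]
    (Z : Matrix m m ℂ) : Matrix m m ℂ :=
  (Matrix.posSemidef_conjTranspose_mul_self Z).1.eigenvectorUnitary.1 *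
    Matrix.diagonal ((↑) ∘ (Real.sqrt ∘ (Matrix.posSemidef_conjTranspose_mul_self Z).1.eigenvalues)) *
    (star (Matrix.posSemidef_conjTranspose_mul_self Z).1.eigenvectorUnitary : Matrix m m ℂ)

/-- Functional calculus: apply `f : ℝ → ℝ` to the eigenvalues of a Hermitian matrix
(junk value `0` if the matrix is not Hermitian). -/
noncomputable def hermApply {m : Type*} [Fintype m] [DecidableEq m]
    (f : ℝ → ℝ) (S : Matrix m m ℂ) : Matrix m m ℂ :=
  if hS : S.IsHermitian then
    (hS.eigenvectorUnitary : Matrix m m ℂ) *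
      Matrix.diagonal (fun i => (f (hS.eigenvalues i) : ℂ)) *
      (star (hS.eigenvectorUnitary : Matrix m m ℂ))
  else 0

/-- Real power of a positive semi-definite matrix by functional calculus. -/
noncomputable def matPow {m : Type*} [Fintype m] [DecidableEq m]
    (S : Matrix m m ℂ) (p : ℝ) : Matrix m m ℂ :=
  hermApply (fun x => x ^ p) S

/-- A symmetric (unitarily invariant) norm on complex `m × m` matrices. -/
structure IsSymmetricNorm {m : Type*} [Fintype m] [DecidableEq m]
    (N : Matrix m m ℂ → ℝ) : Prop where
  add_le : ∀ A B, N (A + B) ≤ N A + N B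
  smul : ∀ (c : ℂ) (A), N (c • A) = ‖c‖ * N A
  eq_zero_of : ∀ A, N A = 0 → A = 0
  unitary_mul_left : ∀ (U : Matrix.unitaryGroup m ℂ) (A), N (U * A) = N A
  mul_unitary_right : ∀ (U : Matrix.unitaryGroup m ℂ) (A), N (A * U) = N A

/-- Eigenvalues of a Hermitian matrix (junk value `0` if not Hermitian). -/
noncomputable def eigVals {m : Type*} [Fintype m] [DecidableEq m]
    (Z : Matrix m m ℂ) : m → ℝ :=
  if hZ : Z.IsHermitian then hZ.eigenvalues else 0

/-- Eigenvalues of a Hermitian `n × n` matrix listed in decreasing order. -/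
noncomputable def eigDown {n : ℕ} (Z : Matrix (Fin n) (Fin n) ℂ) : Fin n → ℝ :=
  fun i => (eigVals Z ∘ Tuple.sort (eigVals Z)) i.rev

/-- `Z ^ ↓`: the diagonal matrix listing the eigenvalues of `Z` in decreasing order. -/
noncomputable def downMat {n : ℕ} (Z : Matrix (Fin n) (Fin n) ℂ) : Matrix (Fin n) (Fin n) ℂ :=
  Matrix.diagonal (fun i => (eigDown Z i : ℂ))

/-- Schatten `p`-norm. -/
noncomputable def schattenNorm {m : Type*} [Fintype m] [DecidableEq m]
    (p : ℝ) (Z : Matrix m m ℂ) : ℝ :=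
  (∑ i, eigVals (matAbs Z) i ^ p) ^ (1 / p)

/-- Operator norm (largest singular value). -/
noncomputable def opNormInf {m : Type*} [Fintype m] [DecidableEq m]
    (Z : Matrix m m ℂ) : ℝ :=
  ⨆ i, Real.sqrt (eigVals (Zᴴ * Z) i)

/-- Numerical range. -/
def numRange {m : Type*} [Fintype m] (X : Matrix m m ℂ) : Set ℂ :=
  {z | ∃ x : m → ℂ, ∑ i, ‖x i‖ ^ 2 = 1 ∧ dotProduct (star x) (X *ᵥ x) = z}

/-- Numerical radius. -/
noncomputable def numRadius {m : Type*} [Fintype m] (X : Matrix m m ℂ) : ℝ :=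
  sSup ((fun z : ℂ => ‖z‖) '' numRange X)
namespace PMNB

open Matrix Finset
open scoped ComplexOrder

variable {n : ℕ} {N : Matrix (Fin n) (Fin n) ℂ → ℝ}

lemma N_zero (hN : IsSymmetricNorm N) : N (0 : Matrix (Fin n) (Fin n) ℂ) = 0 := by
  have h := hN.smul 0 0
  simpa using h

lemma N_sum_le (hN : IsSymmetricNorm N) {ι : Type*} (s : Finset ι)
    (f : ι → Matrix (Fin n) (Fin n) ℂ) :
    N (∑ i ∈ s, f i) ≤ ∑ i ∈ s, N (f i) := by
  classical
  induction s using Finset.cons_induction with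
  | empty => simp [N_zero hN]
  | cons a s ha ih =>
      rw [Finset.sum_cons, Finset.sum_cons]
      exact (hN.add_le _ _).trans (by linarith)

lemma N_conj (hN : IsSymmetricNorm N) (U : Matrix.unitaryGroup (Fin n) ℂ)
    (M : Matrix (Fin n) (Fin n) ℂ) :
    N ((U : Matrix (Fin n) (Fin n) ℂ) * M * star (U : Matrix (Fin n) (Fin n) ℂ)) = N M := by
  have h1 : star (U : Matrix (Fin n) (Fin n) ℂ)
      = ((star U : Matrix.unitaryGroup (Fin n) ℂ) : Matrix (Fin n) (Fin n) ℂ) := rfl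
  rw [h1, hN.mul_unitary_right (star U) _, hN.unitary_mul_left U M]

lemma N_conj' (hN : IsSymmetricNorm N) (U : Matrix.unitaryGroup (Fin n) ℂ)
    (M : Matrix (Fin n) (Fin n) ℂ) :
    N (star (U : Matrix (Fin n) (Fin n) ℂ) * M * (U : Matrix (Fin n) (Fin n) ℂ)) = N M := by
  have h := N_conj hN (star U) M
  simpa [Unitary.coe_star, star_star] using h

/-- Sign diagonal matrices. -/
noncomputable def signMat (n : ℕ) (ε : Fin n → Bool) : Matrix (Fin n) (Fin n) ℂ :=
  Matrix.diagonal (fun i => if ε i then 1 else -1)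

lemma signMat_star (ε : Fin n → Bool) : star (signMat n ε) = signMat n ε := by
  show (signMat n ε)ᴴ = signMat n ε
  rw [signMat, Matrix.diagonal_conjTranspose]
  have h : (star fun i => if ε i then (1:ℂ) else -1) = fun i => if ε i then (1:ℂ) else -1 := by
    funext i
    by_cases h : ε i <;> simp [h, Pi.star_apply]
  rw [h]

lemma signMat_unitary (ε : Fin n → Bool) : signMat n ε ∈ Matrix.unitaryGroup (Fin n) ℂ := by
  rw [Matrix.mem_unitaryGroup_iff, signMat_star]
  rw [signMat, Matrix.diagonal_mul_diagonal]
  have h : (fun i => (if ε i then (1:ℂ) else -1) * (if ε i then (1:ℂ) else -1))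
      = fun _ : Fin n => (1:ℂ) := by
    funext i
    by_cases h : ε i <;> simp [h]
  rw [h]
  exact Matrix.diagonal_one

lemma sum_sign_conj (M : Matrix (Fin n) (Fin n) ℂ) :
    ∑ ε : Fin n → Bool, signMat n ε * M * signMat n ε
      = ((2 : ℂ) ^ n) • Matrix.diagonal (fun i => M i i) := by
  classical
  funext j k
  have hentry : ∀ ε : Fin n → Bool,
      (signMat n ε * M * signMat n ε) j k
        = (if ε j then (1:ℂ) else -1) * ((if ε k then (1:ℂ) else -1) * M j k) := by
    intro ε
    rw [signMat, Matrix.mul_diagonal, Matrix.diagonal_mul]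
    ring
  rw [Matrix.sum_apply]
  simp only [hentry]
  by_cases hjk : j = k
  · subst hjk
    have : ∀ ε : Fin n → Bool,
        (if ε j then (1:ℂ) else -1) * ((if ε j then (1:ℂ) else -1) * M j j) = M j j := by
      intro ε; by_cases h : ε j <;> simp [h]
    rw [Finset.sum_congr rfl (fun ε _ => this ε), Finset.sum_const]
    simp only [Matrix.smul_apply, Matrix.diagonal_apply_eq, Finset.card_univ,
      Fintype.card_fun, Fintype.card_bool, Fintype.card_fin, nsmul_eq_mul, smul_eq_mul]
    push_cast
    ring
  · have hzero : ∑ ε : Fin n → Bool,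
        (if ε j then (1:ℂ) else -1) * ((if ε k then (1:ℂ) else -1) * M j k) = 0 := by
      apply Finset.sum_ninvolution (fun ε => Function.update ε j (!ε j))
      · intro ε
        have h1 : Function.update ε j (!ε j) j = !ε j := Function.update_self _ _ _
        have h2 : Function.update ε j (!ε j) k = ε k :=
          Function.update_of_ne (by simpa using (Ne.symm hjk)) _ _
        rw [h1, h2]
        by_cases h : ε j <;> by_cases h' : ε k <;> simp [h, h']
      · intro ε _ h
        have h2 := congrFun h j
        rw [Function.update_self] at h2
        exact (Bool.not_ne_self (ε j)) h2
      · intro ε; exact Finset.mem_univ _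
      · intro ε
        funext i
        by_cases h : i = j
        · subst h
          simp [Function.update_self]
        · simp [Function.update_of_ne h]
    rw [hzero]
    simp [Matrix.smul_apply, Matrix.diagonal_apply_ne _ hjk]

lemma N_pinch (hN : IsSymmetricNorm N) (M : Matrix (Fin n) (Fin n) ℂ) :
    N (Matrix.diagonal (fun i => M i i)) ≤ N M := by
  classical
  have h2 : ((2:ℂ)^n) ≠ 0 := by positivity
  have key : Matrix.diagonal (fun i => M i i)
      = ((2:ℂ)^n)⁻¹ • ∑ ε : Fin n → Bool, signMat n ε * M * signMat n ε := by
    rw [sum_sign_conj, smul_smul, inv_mul_cancel₀ h2, one_smul]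
  rw [key, hN.smul]
  have hnorm : ‖((2:ℂ)^n)⁻¹‖ = ((2:ℝ)^n)⁻¹ := by
    simp
  have hconj : ∀ ε : Fin n → Bool, N (signMat n ε * M * signMat n ε) = N M := by
    intro ε
    have h := N_conj hN ⟨signMat n ε, signMat_unitary ε⟩ M
    have hcoe : ((⟨signMat n ε, signMat_unitary ε⟩ : Matrix.unitaryGroup (Fin n) ℂ)
        : Matrix (Fin n) (Fin n) ℂ) = signMat n ε := rfl
    rw [hcoe, signMat_star] at h
    exact h
  have hsum : N (∑ ε : Fin n → Bool, signMat n ε * M * signMat n ε)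
      ≤ (2:ℝ)^n * N M := by
    calc N (∑ ε : Fin n → Bool, signMat n ε * M * signMat n ε)
        ≤ ∑ ε : Fin n → Bool, N (signMat n ε * M * signMat n ε) :=
          N_sum_le hN _ _
      _ = ∑ _ε : Fin n → Bool, N M := by
          exact Finset.sum_congr rfl fun ε _ => hconj ε
      _ = (2:ℝ)^n * N M := by
          rw [Finset.sum_const, Finset.card_univ]
          simp [nsmul_eq_mul]
  have hNpos : 0 ≤ ((2:ℝ)^n)⁻¹ := by positivity
  calc ‖((2:ℂ)^n)⁻¹‖ * N (∑ ε : Fin n → Bool, signMat n ε * M * signMat n ε)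
      ≤ ((2:ℝ)^n)⁻¹ * ((2:ℝ)^n * N M) := by
        rw [hnorm]; exact mul_le_mul_of_nonneg_left hsum hNpos
    _ = N M := by field_simp

lemma N_diag_mono (hN : IsSymmetricNorm N) {d e : Fin n → ℝ}
    (hd : ∀ i, 0 ≤ d i) (hde : ∀ i, d i ≤ e i) :
    N (Matrix.diagonal (fun i => (d i : ℂ))) ≤ N (Matrix.diagonal (fun i => (e i : ℂ))) := by
  classical
  set c : Fin n → ℝ := fun i => if e i = 0 then 0 else d i / e i with hc
  have he0 : ∀ i, 0 ≤ e i := fun i => (hd i).trans (hde i)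
  have hc0 : ∀ i, 0 ≤ c i := by
    intro i; by_cases h : e i = 0 <;> simp [hc, h]
    exact div_nonneg (hd i) (he0 i)
  have hc1 : ∀ i, c i ≤ 1 := by
    intro i; by_cases h : e i = 0 <;> simp [hc, h]
    rw [div_le_one (lt_of_le_of_ne (he0 i) (Ne.symm h))]
    exact hde i
  have hce : ∀ i, c i * e i = d i := by
    intro i; by_cases h : e i = 0
    · simp [hc, h]
      nlinarith [hd i, hde i]
    · simp only [hc, h, if_false]
      exact div_mul_cancel₀ _ h
  set z : Fin n → ℂ := fun i => (c i : ℂ) + (Real.sqrt (1 - c i ^ 2) : ℂ) * Complex.I with hz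
  have hz_re : ∀ i, (z i).re = c i := by
    intro i; simp [hz]
  have hz_norm : ∀ i, z i * (starRingEnd ℂ) (z i) = 1 := by
    intro i
    rw [Complex.mul_conj]
    have : Complex.normSq (z i) = 1 := by
      have hsq : Real.sqrt (1 - c i ^ 2) ^ 2 = 1 - c i ^ 2 := by
        rw [Real.sq_sqrt]
        nlinarith [hc0 i, hc1 i]
      simp [hz, Complex.normSq_apply]
      nlinarith [hsq]
    rw [this]; simp
  have hZmem : Matrix.diagonal z ∈ Matrix.unitaryGroup (Fin n) ℂ := by
    rw [Matrix.mem_unitaryGroup_iff]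
    show Matrix.diagonal z * (Matrix.diagonal z)ᴴ = 1
    rw [Matrix.diagonal_conjTranspose, Matrix.diagonal_mul_diagonal]
    have h : (fun i => z i * star z i) = fun _ : Fin n => (1:ℂ) := by
      funext i
      simp only [Pi.star_apply, Complex.star_def]
      exact hz_norm i
    rw [h]
    exact Matrix.diagonal_one
  have hZmem' : Matrix.diagonal (fun i => (starRingEnd ℂ) (z i)) ∈ Matrix.unitaryGroup (Fin n) ℂ := by
    rw [Matrix.mem_unitaryGroup_iff]
    show _ * (Matrix.diagonal fun i => (starRingEnd ℂ) (z i))ᴴ = 1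
    rw [Matrix.diagonal_conjTranspose, Matrix.diagonal_mul_diagonal]
    have h : (fun i => (starRingEnd ℂ) (z i) * star (fun i => (starRingEnd ℂ) (z i)) i)
        = fun _ : Fin n => (1:ℂ) := by
      funext i
      simp only [Pi.star_apply, Complex.star_def, Complex.conj_conj]
      rw [mul_comm]
      exact hz_norm i
    rw [h]
    exact Matrix.diagonal_one
  have key : Matrix.diagonal (fun i => (d i : ℂ))
      = (1/2 : ℂ) • (Matrix.diagonal z * Matrix.diagonal (fun i => (e i : ℂ))
          + Matrix.diagonal (fun i => (starRingEnd ℂ) (z i)) * Matrix.diagonal (fun i => (e i : ℂ))) := by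
    rw [Matrix.diagonal_mul_diagonal, Matrix.diagonal_mul_diagonal]
    ext i j
    rw [Matrix.smul_apply, Matrix.add_apply]
    by_cases hij : i = j
    · subst hij
      rw [Matrix.diagonal_apply_eq, Matrix.diagonal_apply_eq, Matrix.diagonal_apply_eq,
        smul_eq_mul]
      have hrw : z i * (e i : ℂ) + (starRingEnd ℂ) (z i) * (e i : ℂ)
          = (z i + (starRingEnd ℂ) (z i)) * (e i : ℂ) := by ring
      rw [hrw, Complex.add_conj, hz_re, ← hce i]
      push_cast
      ring
    · rw [Matrix.diagonal_apply_ne _ hij, Matrix.diagonal_apply_ne _ hij,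
        Matrix.diagonal_apply_ne _ hij]
      simp
  rw [key, hN.smul]
  have h1 : N (Matrix.diagonal z * Matrix.diagonal (fun i => (e i : ℂ)))
      = N (Matrix.diagonal (fun i => (e i : ℂ))) :=
    hN.unitary_mul_left ⟨_, hZmem⟩ _
  have h2 : N (Matrix.diagonal (fun i => (starRingEnd ℂ) (z i)) * Matrix.diagonal (fun i => (e i : ℂ)))
      = N (Matrix.diagonal (fun i => (e i : ℂ))) :=
    hN.unitary_mul_left ⟨_, hZmem'⟩ _
  have h3 := hN.add_le (Matrix.diagonal z * Matrix.diagonal (fun i => (e i : ℂ)))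
    (Matrix.diagonal (fun i => (starRingEnd ℂ) (z i)) * Matrix.diagonal (fun i => (e i : ℂ)))
  have hn : ‖(1/2 : ℂ)‖ = 1/2 := by norm_num
  rw [hn]
  nlinarith [h3, h1, h2]

lemma conj_diag_entry (W : Matrix (Fin n) (Fin n) ℂ) (d : Fin n → ℝ) (i : Fin n) :
    (star W * Matrix.diagonal (fun j => (d j : ℂ)) * W) i i
      = ((∑ j, d j * Complex.normSq (W j i) : ℝ) : ℂ) := by
  have h : (star W * Matrix.diagonal (fun j => (d j : ℂ)) * W) i i
      = ∑ j, (d j : ℂ) * ((Complex.normSq (W j i) : ℝ) : ℂ) := by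
    rw [Matrix.mul_apply]
    refine Finset.sum_congr rfl fun j _ => ?_
    rw [Matrix.mul_diagonal, Matrix.star_apply]
    rw [Complex.normSq_eq_conj_mul_self]
    show star (W j i) * (d j : ℂ) * W j i = _
    rw [Complex.star_def]
    ring
  rw [h]
  push_cast
  rfl

lemma unitary_col_sum (W : Matrix (Fin n) (Fin n) ℂ) (hW : star W * W = 1) (i : Fin n) :
    ∑ j, Complex.normSq (W j i) = 1 := by
  have h := conj_diag_entry W (fun _ => 1) i
  simp only [Complex.ofReal_one, one_mul] at h
  have h1 : Matrix.diagonal (fun _ : Fin n => (1:ℂ)) = 1 := Matrix.diagonal_one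
  rw [h1, mul_one, hW] at h
  have : ((∑ j, Complex.normSq (W j i) : ℝ) : ℂ) = 1 := by
    rw [← h]; simp [Matrix.one_apply]
  exact_mod_cast this

end PMNB

open PMNB in
theorem power_mean_norm_bound {n : ℕ} (S T : Matrix (Fin n) (Fin n) ℂ)
    (hS : S.PosSemidef) (hT : T.PosSemidef)
    (p : ℝ) (hp : 1 ≤ p)
    (N : Matrix (Fin n) (Fin n) ℂ → ℝ) (hN : IsSymmetricNorm N) :
    N (matPow ((1 / 2 : ℂ) • (S + T)) p) ≤ (N (matPow S p) + N (matPow T p)) / 2 := by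
  classical
  -- C is positive semidefinite
  have hC : ((1 / 2 : ℂ) • (S + T)).PosSemidef := by
    refine ⟨?_, ?_⟩
    · show ((1 / 2 : ℂ) • (S + T))ᴴ = _
      rw [Matrix.conjTranspose_smul, Matrix.conjTranspose_add, hS.1, hT.1]
      congr 1
      simp
    · intro x
      exact ((hS.add hT).smul (by rw [Complex.le_def]; norm_num : (0:ℂ) ≤ 1 / 2)).2 x
  have hCH : ((1 / 2 : ℂ) • (S + T)).IsHermitian := hC.1
  -- unfolding matPow
  have hmp : ∀ (X : Matrix (Fin n) (Fin n) ℂ) (hX : X.IsHermitian),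
      matPow X p = (hX.eigenvectorUnitary : Matrix (Fin n) (Fin n) ℂ)
        * Matrix.diagonal (fun i => ((hX.eigenvalues i ^ p : ℝ) : ℂ))
        * star (hX.eigenvectorUnitary : Matrix (Fin n) (Fin n) ℂ) := by
    intro X hX
    simp only [matPow, hermApply, dif_pos hX]
  set U : Matrix (Fin n) (Fin n) ℂ := (hCH.eigenvectorUnitary : Matrix (Fin n) (Fin n) ℂ)
    with hUdef
  set V : Matrix (Fin n) (Fin n) ℂ := (hS.1.eigenvectorUnitary : Matrix (Fin n) (Fin n) ℂ)
    with hVdef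
  set V' : Matrix (Fin n) (Fin n) ℂ := (hT.1.eigenvectorUnitary : Matrix (Fin n) (Fin n) ℂ)
    with hV'def
  set μ : Fin n → ℝ := hCH.eigenvalues with hμdef
  set ν : Fin n → ℝ := hS.1.eigenvalues with hνdef
  set ν' : Fin n → ℝ := hT.1.eigenvalues with hν'def
  set WS : Matrix (Fin n) (Fin n) ℂ := star V * U with hWSdef
  set WT : Matrix (Fin n) (Fin n) ℂ := star V' * U with hWTdef
  have hUU : star U * U = 1 := Matrix.mem_unitaryGroup_iff'.mp hCH.eigenvectorUnitary.2
  have hVV : V * star V = 1 := Matrix.mem_unitaryGroup_iff.mp hS.1.eigenvectorUnitary.2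
  have hV'V' : V' * star V' = 1 := Matrix.mem_unitaryGroup_iff.mp hT.1.eigenvectorUnitary.2
  have hWS1 : star WS * WS = 1 := by
    have h : star WS * WS = star U * (V * star V) * U := by
      rw [hWSdef]; simp only [Matrix.star_mul, star_star, Matrix.mul_assoc]
    rw [h, hVV, Matrix.mul_one, hUU]
  have hWT1 : star WT * WT = 1 := by
    have h : star WT * WT = star U * (V' * star V') * U := by
      rw [hWTdef]; simp only [Matrix.star_mul, star_star, Matrix.mul_assoc]
    rw [h, hV'V', Matrix.mul_one, hUU]
  -- conjugated matrices
  have hconjS : ∀ d : Fin n → ℝ,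
      star U * (V * Matrix.diagonal (fun j => (d j : ℂ)) * star V) * U
        = star WS * Matrix.diagonal (fun j => (d j : ℂ)) * WS := by
    intro d
    rw [hWSdef]; simp only [Matrix.star_mul, star_star, Matrix.mul_assoc]
  have hconjT : ∀ d : Fin n → ℝ,
      star U * (V' * Matrix.diagonal (fun j => (d j : ℂ)) * star V') * U
        = star WT * Matrix.diagonal (fun j => (d j : ℂ)) * WT := by
    intro d
    rw [hWTdef]; simp only [Matrix.star_mul, star_star, Matrix.mul_assoc]
  -- diagonal entries
  set aS : Fin n → ℝ := fun i => ∑ j, (ν j ^ p) * Complex.normSq (WS j i) with haSdef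
  set aT : Fin n → ℝ := fun i => ∑ j, (ν' j ^ p) * Complex.normSq (WT j i) with haTdef
  set sS : Fin n → ℝ := fun i => ∑ j, ν j * Complex.normSq (WS j i) with hsSdef
  set sT : Fin n → ℝ := fun i => ∑ j, ν' j * Complex.normSq (WT j i) with hsTdef
  have hSdiag : S = V * Matrix.diagonal (fun j => ((ν j : ℝ) : ℂ)) * star V := by
    have h := hS.1.spectral_theorem
    rw [Unitary.conjStarAlgAut_apply] at h
    convert h using 2
    all_goals rfl
  have hTdiag : T = V' * Matrix.diagonal (fun j => ((ν' j : ℝ) : ℂ)) * star V' := by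
    have h := hT.1.spectral_theorem
    rw [Unitary.conjStarAlgAut_apply] at h
    convert h using 2
    all_goals rfl
  have hmpS : star U * matPow S p * U
      = star WS * Matrix.diagonal (fun j => ((ν j ^ p : ℝ) : ℂ)) * WS := by
    rw [hmp S hS.1, ← hVdef, ← hνdef, hconjS]
  have hmpT : star U * matPow T p * U
      = star WT * Matrix.diagonal (fun j => ((ν' j ^ p : ℝ) : ℂ)) * WT := by
    rw [hmp T hT.1, ← hV'def, ← hν'def, hconjT]
  have haS : ∀ i, (star U * matPow S p * U) i i = ((aS i : ℝ) : ℂ) := by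
    intro i; rw [hmpS, conj_diag_entry]
  have haT : ∀ i, (star U * matPow T p * U) i i = ((aT i : ℝ) : ℂ) := by
    intro i; rw [hmpT, conj_diag_entry]
  have hsS' : ∀ i, (star U * S * U) i i = ((sS i : ℝ) : ℂ) := by
    intro i
    conv_lhs => rw [hSdiag]
    rw [hconjS, conj_diag_entry]
  have hsT' : ∀ i, (star U * T * U) i i = ((sT i : ℝ) : ℂ) := by
    intro i
    conv_lhs => rw [hTdiag]
    rw [hconjT, conj_diag_entry]
  -- eigenvalues of C
  have hdiagC : star U * ((1 / 2 : ℂ) • (S + T)) * U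
      = Matrix.diagonal (fun i => ((μ i : ℝ) : ℂ)) := by
    have h := hCH.conjStarAlgAut_star_eigenvectorUnitary
    rw [Unitary.conjStarAlgAut_star_apply, ← hUdef] at h
    convert h using 2
    all_goals rfl
  have hμeq : ∀ i, μ i = 1 / 2 * (sS i + sT i) := by
    intro i
    have h1 : (star U * ((1 / 2 : ℂ) • (S + T)) * U) i i = ((μ i : ℝ) : ℂ) := by
      rw [hdiagC, Matrix.diagonal_apply_eq]
    have h2 : (star U * ((1 / 2 : ℂ) • (S + T)) * U) i i
        = (1 / 2 : ℂ) * ((star U * S * U) i i + (star U * T * U) i i) := by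
      simp only [Matrix.smul_mul, Matrix.mul_smul, Matrix.mul_add, Matrix.add_mul,
        Matrix.smul_apply, Matrix.add_apply, smul_eq_mul]
    rw [h1, hsS' i, hsT' i] at h2
    have h3 : ((μ i : ℝ) : ℂ) = (((1 / 2 * (sS i + sT i)) : ℝ) : ℂ) := by
      rw [h2]; push_cast; ring
    exact_mod_cast h3
  -- nonnegativity
  have hν0 : ∀ j, 0 ≤ ν j := hS.eigenvalues_nonneg
  have hν'0 : ∀ j, 0 ≤ ν' j := hT.eigenvalues_nonneg
  have hμ0 : ∀ i, 0 ≤ μ i := hC.eigenvalues_nonneg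
  have hsS0 : ∀ i, 0 ≤ sS i := fun i =>
    Finset.sum_nonneg fun j _ => mul_nonneg (hν0 j) (Complex.normSq_nonneg _)
  have hsT0 : ∀ i, 0 ≤ sT i := fun i =>
    Finset.sum_nonneg fun j _ => mul_nonneg (hν'0 j) (Complex.normSq_nonneg _)
  -- column sums
  have hwS : ∀ i, ∑ j, Complex.normSq (WS j i) = 1 := unitary_col_sum WS hWS1
  have hwT : ∀ i, ∑ j, Complex.normSq (WT j i) = 1 := unitary_col_sum WT hWT1
  -- Jensen
  have hJS : ∀ i, sS i ^ p ≤ aS i := by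
    intro i
    have h := Real.rpow_arith_mean_le_arith_mean_rpow Finset.univ
      (fun j => Complex.normSq (WS j i)) ν
      (fun j _ => Complex.normSq_nonneg _) (hwS i) (fun j _ => hν0 j) hp
    calc sS i ^ p = (∑ j, Complex.normSq (WS j i) * ν j) ^ p := by
          rw [hsSdef]
          congr 1
          exact Finset.sum_congr rfl fun j _ => mul_comm _ _
      _ ≤ ∑ j, Complex.normSq (WS j i) * ν j ^ p := h
      _ = aS i := by
          rw [haSdef]
          exact Finset.sum_congr rfl fun j _ => mul_comm _ _
  have hJT : ∀ i, sT i ^ p ≤ aT i := by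
    intro i
    have h := Real.rpow_arith_mean_le_arith_mean_rpow Finset.univ
      (fun j => Complex.normSq (WT j i)) ν'
      (fun j _ => Complex.normSq_nonneg _) (hwT i) (fun j _ => hν'0 j) hp
    calc sT i ^ p = (∑ j, Complex.normSq (WT j i) * ν' j) ^ p := by
          rw [hsTdef]
          congr 1
          exact Finset.sum_congr rfl fun j _ => mul_comm _ _
      _ ≤ ∑ j, Complex.normSq (WT j i) * ν' j ^ p := h
      _ = aT i := by
          rw [haTdef]
          exact Finset.sum_congr rfl fun j _ => mul_comm _ _
  -- midpoint convexity
  have hmid : ∀ i, μ i ^ p ≤ 1 / 2 * (aS i + aT i) := by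
    intro i
    have h := Real.rpow_arith_mean_le_arith_mean_rpow Finset.univ
      (![1/2, 1/2]) (![sS i, sT i])
      (by intro j _; fin_cases j <;> norm_num)
      (by simp [Fin.sum_univ_two]; norm_num)
      (by intro j _; fin_cases j <;> simp [hsS0 i, hsT0 i]) hp
    simp only [Fin.sum_univ_two] at h
    simp only [Matrix.cons_val_zero, Matrix.cons_val_one, Matrix.head_cons] at h
    have h2 : (1 / 2 * sS i + 1 / 2 * sT i) ^ p ≤ 1 / 2 * sS i ^ p + 1 / 2 * sT i ^ p := h
    rw [hμeq i]
    have h3 : (1 / 2 * (sS i + sT i)) = (1 / 2 * sS i + 1 / 2 * sT i) := by ring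
    rw [h3]
    have h4 := hJS i
    have h5 := hJT i
    linarith
  -- now the norm chain
  have step1 : N (matPow ((1 / 2 : ℂ) • (S + T)) p)
      = N (Matrix.diagonal fun i => ((μ i ^ p : ℝ) : ℂ)) := by
    rw [hmp _ hCH, ← hUdef, ← hμdef]
    exact N_conj hN hCH.eigenvectorUnitary _
  have step2 : N (Matrix.diagonal fun i => ((μ i ^ p : ℝ) : ℂ))
      ≤ N (Matrix.diagonal fun i => (((1 / 2 * (aS i + aT i)) : ℝ) : ℂ)) := by
    apply N_diag_mono hN
    · intro i; exact Real.rpow_nonneg (hμ0 i) p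
    · intro i; exact hmid i
  have split : (Matrix.diagonal fun i => (((1 / 2 * (aS i + aT i)) : ℝ) : ℂ))
      = (1 / 2 : ℂ) • ((Matrix.diagonal fun i => ((aS i : ℝ) : ℂ))
          + (Matrix.diagonal fun i => ((aT i : ℝ) : ℂ))) := by
    rw [Matrix.diagonal_add, ← Matrix.diagonal_smul]
    refine congrArg Matrix.diagonal (funext fun i => ?_)
    show ((1 / 2 * (aS i + aT i) : ℝ) : ℂ) = (1 / 2 : ℂ) * ((aS i : ℂ) + (aT i : ℂ))
    push_cast
    ring
  have step3 : N (Matrix.diagonal fun i => (((1 / 2 * (aS i + aT i)) : ℝ) : ℂ))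
      ≤ 1 / 2 * (N (Matrix.diagonal fun i => ((aS i : ℝ) : ℂ))
          + N (Matrix.diagonal fun i => ((aT i : ℝ) : ℂ))) := by
    rw [split, hN.smul]
    have hhalf : ‖(1 / 2 : ℂ)‖ = 1 / 2 := by norm_num
    rw [hhalf]
    have h := hN.add_le (Matrix.diagonal fun i => ((aS i : ℝ) : ℂ))
      (Matrix.diagonal fun i => ((aT i : ℝ) : ℂ))
    nlinarith [h]
  have step4S : N (Matrix.diagonal fun i => ((aS i : ℝ) : ℂ)) ≤ N (matPow S p) := by
    have hdg : (Matrix.diagonal fun i => ((aS i : ℝ) : ℂ))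
        = Matrix.diagonal fun i => (star U * matPow S p * U) i i := by
      exact congrArg Matrix.diagonal (funext fun i => (haS i).symm)
    rw [hdg]
    calc N (Matrix.diagonal fun i => (star U * matPow S p * U) i i)
        ≤ N (star U * matPow S p * U) := N_pinch hN _
      _ = N (matPow S p) := by
          rw [hUdef]
          exact N_conj' hN hCH.eigenvectorUnitary _
  have step4T : N (Matrix.diagonal fun i => ((aT i : ℝ) : ℂ)) ≤ N (matPow T p) := by
    have hdg : (Matrix.diagonal fun i => ((aT i : ℝ) : ℂ))
        = Matrix.diagonal fun i => (star U * matPow T p * U) i i := by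
      exact congrArg Matrix.diagonal (funext fun i => (haT i).symm)
    rw [hdg]
    calc N (Matrix.diagonal fun i => (star U * matPow T p * U) i i)
        ≤ N (star U * matPow T p * U) := N_pinch hN _
      _ = N (matPow T p) := by
          rw [hUdef]
          exact N_conj' hN hCH.eigenvectorUnitary _
  rw [step1]
  have := step2.trans (step3.trans (by linarith : 1 / 2 * (N (Matrix.diagonal fun i => ((aS i : ℝ) : ℂ)) + N (Matrix.diagonal fun i => ((aT i : ℝ) : ℂ))) ≤ (N (matPow S p) + N (matPow T p)) / 2))
  exact this
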